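/- Fix δ ∈ (0,1) and let u = |x|+t, v = |x|-t on the region D(δ) = {1 < u < 3-δ, 1 < v < 3-δ} ⊂ ℝ^{n+1} with n ≥ 1. Let H(t,x) = ((u-1)/(3-δ-u)) · ((v-1)/(3-δ-v)). Then for every s > 0, at each point of the level set H⁻¹(s) the Minkowski gradient ∇H is spacelike, i.e. g(∇H, ∇H) > 0; in particular each level surface H⁻¹(s) is a timelike hypersurface. -/

import Mathlib

open RealInnerProductSpace

lemma hasFDerivAt_norm_ne_zero {E : Type*} [NormedAddCommGroup E] [InnerProductSpace ℝ E]
    {x : E} (hx : x ≠ 0) :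
    HasFDerivAt (fun y : E => ‖y‖) (‖x‖⁻¹ • innerSL ℝ x) x := by
  have hx2 : (0:ℝ) < ‖x‖ := norm_pos_iff.mpr hx
  have h1 : HasFDerivAt (fun y : E => ‖y‖ ^ 2) (2 • innerSL ℝ x) x := by
    simpa using (hasFDerivAt_id x).norm_sq
  have h2 : HasDerivAt Real.sqrt (1 / (2 * Real.sqrt (‖x‖ ^ 2))) (‖x‖ ^ 2) :=
    Real.hasDerivAt_sqrt (by positivity)
  have h3 := h2.comp_hasFDerivAt x h1
  have heq : (Real.sqrt ∘ fun y : E => ‖y‖ ^ 2) = fun y : E => ‖y‖ :=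
    funext fun y => by simp [Real.sqrt_sq (norm_nonneg y)]
  rw [heq] at h3
  refine h3.congr_fderiv ?_
  rw [Real.sqrt_sq hx2.le]
  ext y
  simp only [ContinuousLinearMap.smul_apply, ContinuousLinearMap.coe_smul', Pi.smul_apply,
    smul_eq_mul, nsmul_eq_mul, Nat.cast_ofNat]
  field_simp


/-- The Minkowski gradient of `f : ℝ^{1+n} → ℝ`, obtained from `df` by raising the
index with the metric `g = -dt² + dx²`: `∇f = (-∂ₜ f, ∇ₓ f)`. -/
noncomputable def minkGrad {n : ℕ} (f : ℝ × EuclideanSpace ℝ (Fin n) → ℝ)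
    (p : ℝ × EuclideanSpace ℝ (Fin n)) : ℝ × EuclideanSpace ℝ (Fin n) :=
  (-(fderiv ℝ f p (1, 0)), gradient (fun y => f (p.1, y)) p.2)

/-- The Minkowski inner product `g = -dt² + dx²` on `ℝ^{1+n}`. -/
noncomputable def minkInner {n : ℕ} (X Y : ℝ × EuclideanSpace ℝ (Fin n)) : ℝ :=
  -(X.1 * Y.1) + ⟪X.2, Y.2⟫

/-- The level surfaces of the foliation function `H` are timelike: at every
point of a level set `H⁻¹(s)` with `s > 0`, the Minkowski gradient of `H` is
spacelike, `g(∇H, ∇H) > 0`. -/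
theorem foliation_level_sets_timelike (n : ℕ) (hn : 1 ≤ n)
    (δ : ℝ) (hδ : 0 < δ) (hδ1 : δ < 1)
    (u v H : ℝ × EuclideanSpace ℝ (Fin n) → ℝ)
    (hu : u = fun p => ‖p.2‖ + p.1)
    (hv : v = fun p => ‖p.2‖ - p.1)
    (hH : H = fun p => ((u p - 1) / (3 - δ - u p)) * ((v p - 1) / (3 - δ - v p)))
    (D : Set (ℝ × EuclideanSpace ℝ (Fin n)))
    (hD : D = {p | 1 < u p ∧ u p < 3 - δ ∧ 1 < v p ∧ v p < 3 - δ}) :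
    ∀ s : ℝ, 0 < s → ∀ p ∈ D, H p = s →
      0 < minkInner (minkGrad H p) (minkGrad H p) := by
  subst hu hv hH hD
  intro s hs p hp hHp
  obtain ⟨t, x⟩ := p
  simp only [Set.mem_setOf_eq] at hp
  obtain ⟨h1, h2, h3, h4⟩ := hp
  have h1' : (1:ℝ) < ‖x‖ + t := h1
  have h2' : ‖x‖ + t < 3 - δ := h2
  have h3' : (1:ℝ) < ‖x‖ - t := h3
  have h4' : ‖x‖ - t < 3 - δ := h4
  clear h1 h2 h3 h4 hHp hs
  have hr : (1:ℝ) < ‖x‖ := by linarith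
  have hx0 : x ≠ 0 := by
    intro h; rw [h, norm_zero] at hr; linarith
  have hφ : ∀ w : ℝ, w < 3 - δ →
      HasDerivAt (fun w : ℝ => (w - 1) / (3 - δ - w)) ((2 - δ) / (3 - δ - w) ^ 2) w := by
    intro w hw
    have hne : 3 - δ - w ≠ 0 := ne_of_gt (by linarith)
    have h := ((hasDerivAt_id w).sub_const 1).div
      ((hasDerivAt_const w (3 - δ)).sub (hasDerivAt_id w)) hne
    refine h.congr_deriv ?_
    simp only [Pi.sub_apply, id_eq]
    congr 1
    ring
  set A : ℝ := (2 - δ) / (3 - δ - (‖x‖ + t)) ^ 2 * ((‖x‖ - t - 1) / (3 - δ - (‖x‖ - t))) with hA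
  set B : ℝ := (‖x‖ + t - 1) / (3 - δ - (‖x‖ + t)) * ((2 - δ) / (3 - δ - (‖x‖ - t)) ^ 2) with hB
  have hApos : 0 < A := mul_pos
    (div_pos (by linarith) (pow_pos (by linarith) 2))
    (div_pos (by linarith) (by linarith))
  have hBpos : 0 < B := mul_pos
    (div_pos (by linarith) (by linarith))
    (div_pos (by linarith) (pow_pos (by linarith) 2))
  have hN : HasFDerivAt (fun y : EuclideanSpace ℝ (Fin n) => ‖y‖) (‖x‖⁻¹ • innerSL ℝ x) x :=
    hasFDerivAt_norm_ne_zero hx0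
  -- time derivative
  have hfd : fderiv ℝ (fun q : ℝ × EuclideanSpace ℝ (Fin n) =>
      ((‖q.2‖ + q.1 - 1) / (3 - δ - (‖q.2‖ + q.1))) *
      ((‖q.2‖ - q.1 - 1) / (3 - δ - (‖q.2‖ - q.1)))) (t, x)
      ((1 : ℝ), (0 : EuclideanSpace ℝ (Fin n))) = A - B := by
    have hu' : HasFDerivAt (fun q : ℝ × EuclideanSpace ℝ (Fin n) => ‖q.2‖ + q.1)
        ((‖x‖⁻¹ • innerSL ℝ x).comp (ContinuousLinearMap.snd ℝ ℝ (EuclideanSpace ℝ (Fin n)))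
          + ContinuousLinearMap.fst ℝ ℝ (EuclideanSpace ℝ (Fin n))) (t, x) :=
      (hN.comp (t, x) hasFDerivAt_snd).add hasFDerivAt_fst
    have hv' : HasFDerivAt (fun q : ℝ × EuclideanSpace ℝ (Fin n) => ‖q.2‖ - q.1)
        ((‖x‖⁻¹ • innerSL ℝ x).comp (ContinuousLinearMap.snd ℝ ℝ (EuclideanSpace ℝ (Fin n)))
          - ContinuousLinearMap.fst ℝ ℝ (EuclideanSpace ℝ (Fin n))) (t, x) :=
      (hN.comp (t, x) hasFDerivAt_snd).sub hasFDerivAt_fst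
    have hc := (hφ (‖x‖ + t) h2').comp_hasFDerivAt (t, x) hu'
    have hd := (hφ (‖x‖ - t) h4').comp_hasFDerivAt (t, x) hv'
    have hH' := hc.mul hd
    have hH'' : HasFDerivAt (fun q : ℝ × EuclideanSpace ℝ (Fin n) =>
        ((‖q.2‖ + q.1 - 1) / (3 - δ - (‖q.2‖ + q.1))) *
        ((‖q.2‖ - q.1 - 1) / (3 - δ - (‖q.2‖ - q.1))))
        ((((‖x‖ + t - 1) / (3 - δ - (‖x‖ + t))) •
          (((2 - δ) / (3 - δ - (‖x‖ - t)) ^ 2) •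
            ((‖x‖⁻¹ • innerSL ℝ x).comp (ContinuousLinearMap.snd ℝ ℝ (EuclideanSpace ℝ (Fin n)))
              - ContinuousLinearMap.fst ℝ ℝ (EuclideanSpace ℝ (Fin n))))) +
         (((‖x‖ - t - 1) / (3 - δ - (‖x‖ - t))) •
          (((2 - δ) / (3 - δ - (‖x‖ + t)) ^ 2) •
            ((‖x‖⁻¹ • innerSL ℝ x).comp (ContinuousLinearMap.snd ℝ ℝ (EuclideanSpace ℝ (Fin n)))
              + ContinuousLinearMap.fst ℝ ℝ (EuclideanSpace ℝ (Fin n)))))) (t, x) := hH'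
    rw [hH''.fderiv]
    simp only [ContinuousLinearMap.add_apply, ContinuousLinearMap.coe_smul', Pi.smul_apply,
      ContinuousLinearMap.sub_apply, ContinuousLinearMap.coe_comp', Function.comp_apply,
      ContinuousLinearMap.coe_fst', ContinuousLinearMap.coe_snd', ContinuousLinearMap.smul_apply,
      innerSL_apply_apply, inner_zero_right, smul_eq_mul, mul_zero, zero_add, zero_sub, hA, hB]
    ring
  -- spatial gradient
  have hgrad : gradient (fun y : EuclideanSpace ℝ (Fin n) =>
      ((‖y‖ + t - 1) / (3 - δ - (‖y‖ + t))) *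
      ((‖y‖ - t - 1) / (3 - δ - (‖y‖ - t)))) x = ((A + B) * ‖x‖⁻¹) • x := by
    have hu2 : HasFDerivAt (fun y : EuclideanSpace ℝ (Fin n) => ‖y‖ + t)
        (‖x‖⁻¹ • innerSL ℝ x) x := hN.add_const t
    have hv2 : HasFDerivAt (fun y : EuclideanSpace ℝ (Fin n) => ‖y‖ - t)
        (‖x‖⁻¹ • innerSL ℝ x) x := hN.sub_const t
    have hc := (hφ (‖x‖ + t) h2').comp_hasFDerivAt x hu2
    have hd := (hφ (‖x‖ - t) h4').comp_hasFDerivAt x hv2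
    have hf2' := hc.mul hd
    have hf2 : HasFDerivAt (fun y : EuclideanSpace ℝ (Fin n) =>
        ((‖y‖ + t - 1) / (3 - δ - (‖y‖ + t))) *
        ((‖y‖ - t - 1) / (3 - δ - (‖y‖ - t))))
        ((((‖x‖ + t - 1) / (3 - δ - (‖x‖ + t))) •
            (((2 - δ) / (3 - δ - (‖x‖ - t)) ^ 2) • (‖x‖⁻¹ • innerSL ℝ x))) +
         (((‖x‖ - t - 1) / (3 - δ - (‖x‖ - t))) •
            (((2 - δ) / (3 - δ - (‖x‖ + t)) ^ 2) • (‖x‖⁻¹ • innerSL ℝ x)))) x := hf2'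
    have hg : HasGradientAt (fun y : EuclideanSpace ℝ (Fin n) =>
        ((‖y‖ + t - 1) / (3 - δ - (‖y‖ + t))) *
        ((‖y‖ - t - 1) / (3 - δ - (‖y‖ - t)))) (((A + B) * ‖x‖⁻¹) • x) x := by
      rw [hasGradientAt_iff_hasFDerivAt]
      have hCLM : (InnerProductSpace.toDual ℝ (EuclideanSpace ℝ (Fin n)))
          (((A + B) * ‖x‖⁻¹) • x) =
          (((‖x‖ + t - 1) / (3 - δ - (‖x‖ + t))) •
            (((2 - δ) / (3 - δ - (‖x‖ - t)) ^ 2) • (‖x‖⁻¹ • innerSL ℝ x))) +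
          (((‖x‖ - t - 1) / (3 - δ - (‖x‖ - t))) •
            (((2 - δ) / (3 - δ - (‖x‖ + t)) ^ 2) • (‖x‖⁻¹ • innerSL ℝ x))) := by
        ext y
        simp only [InnerProductSpace.toDual_apply_apply, ContinuousLinearMap.add_apply,
          ContinuousLinearMap.coe_smul', Pi.smul_apply, ContinuousLinearMap.smul_apply,
          innerSL_apply_apply, smul_eq_mul, real_inner_smul_left, hA, hB]
        ring
      rw [hCLM]
      exact hf2
    exact hg.gradient
  have hinner : ⟪((A + B) * ‖x‖⁻¹) • x, ((A + B) * ‖x‖⁻¹) • x⟫ = (A + B) ^ 2 := by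
    rw [real_inner_smul_left, real_inner_smul_right, real_inner_self_eq_norm_sq]
    have hxne : ‖x‖ ≠ 0 := by positivity
    field_simp
  simp only [minkInner, minkGrad]
  rw [hfd, hgrad, hinner]
  nlinarith [mul_pos hApos hBpos]
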